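/- arXiv:1912.11914 — 2 statements merged into one kernel-verified Lean document; each statement's English description precedes it below -/
import Mathlib

section
/- There exist constants C > 0 and δ > 0 such that for all α > 0 and Δ > 0 with αΔ < δ, the aliased Matérn spectral density with ν = 3/2, d = 1 evaluated at the highest frequency 1/(2Δ) satisfies | M_Δ(1/(2Δ); 3/2, 1)/(4/α) − α⁴Δ⁴/48 + α⁶Δ⁶/240 | ≤ C α⁸Δ⁸. In particular M_Δ(1/(2Δ); 3/2, 1)/(4/α) = α⁴Δ⁴/48 + O(α⁶Δ⁶) as αΔ → 0. -/
open Real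

theorem bern5' : bernoulli' 5 = 0 := by
  have h52 : Nat.choose 5 2 = 10 := by decide
  have h53 : Nat.choose 5 3 = 10 := by decide
  rw [bernoulli'_def]
  norm_num [Finset.sum_range_succ, h52, h53]

theorem bern6' : bernoulli' 6 = 1 / 42 := by
  have h62 : Nat.choose 6 2 = 15 := by decide
  have h63 : Nat.choose 6 3 = 20 := by decide
  have h64 : Nat.choose 6 4 = 15 := by decide
  rw [bernoulli'_def]
  norm_num [Finset.sum_range_succ, h62, h63, h64, bern5']

theorem zeta6' : HasSum (fun n : ℕ => (1 : ℝ) / (n : ℝ) ^ 6) (π ^ 6 / 945) := by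
  convert hasSum_zeta_nat (three_ne_zero) using 1; norm_num
  rw [bernoulli_eq_bernoulli'_of_ne_one (by norm_num), bern6']
  norm_num [Nat.factorial]; field_simp; ring

theorem odd_pow_sum {p : ℕ} {L : ℝ}
    (hL : HasSum (fun n : ℕ => (1 : ℝ) / (n : ℝ) ^ p) L) :
    HasSum (fun n : ℕ => (1 : ℝ) / ((2 * (n : ℝ) + 1)) ^ p) (L - L / 2 ^ p) := by
  have heven : HasSum (fun k : ℕ => (1 : ℝ) / ((2 * k : ℕ) : ℝ) ^ p) (L / 2 ^ p) := by
    have h := hL.mul_left ((1:ℝ) / 2 ^ p)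
    have e1 : (fun k : ℕ => (1 : ℝ) / ((2 * k : ℕ) : ℝ) ^ p)
        = fun k : ℕ => (1:ℝ) / 2 ^ p * (1 / (k : ℝ) ^ p) := by
      funext k; push_cast
      rw [mul_pow, one_div, one_div, one_div, mul_inv, inv_mul_eq_div, div_eq_mul_inv]
    have e2 : L / 2 ^ p = 1/2^p * L := by ring
    rw [e1, e2]
    exact h
  have hodd : Summable (fun k : ℕ => (1 : ℝ) / ((2 * k + 1 : ℕ) : ℝ) ^ p) := by
    have hinj : Function.Injective (fun k : ℕ => 2 * k + 1) := by
      intro a b h; simpa using h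
    exact hL.summable.comp_injective hinj
  have hcomb : HasSum (fun n : ℕ => (1:ℝ) / (n:ℝ) ^ p)
      (L / 2 ^ p + ∑' k, (1 : ℝ) / ((2 * k + 1 : ℕ) : ℝ) ^ p) :=
    HasSum.even_add_odd heven hodd.hasSum
  have huniq : L / 2 ^ p + ∑' k, (1 : ℝ) / ((2 * k + 1 : ℕ) : ℝ) ^ p = L :=
    hcomb.unique hL
  have hts : (∑' k, (1 : ℝ) / ((2 * k + 1 : ℕ) : ℝ) ^ p) = L - L / 2 ^ p := by linarith
  have h2 := hodd.hasSum
  rw [hts] at h2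
  have e3 : (fun n : ℕ => (1 : ℝ) / ((2 * (n : ℝ) + 1)) ^ p)
      = fun k : ℕ => (1 : ℝ) / ((2 * k + 1 : ℕ) : ℝ) ^ p := by
    funext k; push_cast; ring_nf
  rw [e3]
  exact h2

theorem odd4' : HasSum (fun n : ℕ => (1 : ℝ) / (2 * (n : ℝ) + 1) ^ 4) (π ^ 4 / 96) := by
  have h := odd_pow_sum hasSum_zeta_four
  convert h using 1
  ring

theorem odd6' : HasSum (fun n : ℕ => (1 : ℝ) / (2 * (n : ℝ) + 1) ^ 6) (π ^ 6 / 960) := by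
  have h := odd_pow_sum zeta6'
  convert h using 1
  ring

theorem intS2 : HasSum (fun k : ℤ => (1:ℝ) / (π ^ 2 * (2 * (k : ℝ) + 1) ^ 2) ^ 2) (1 / 48) := by
  have hnat : HasSum (fun n : ℕ => (1:ℝ) / (π ^ 2 * (2 * ((n : ℤ) : ℝ) + 1) ^ 2) ^ 2) (1 / 96) := by
    have h := odd4'.mul_left ((1:ℝ) / π ^ 4)
    have e1 : (fun n : ℕ => (1:ℝ) / (π ^ 2 * (2 * ((n : ℤ) : ℝ) + 1) ^ 2) ^ 2)
        = fun n : ℕ => (1:ℝ) / π ^ 4 * (1 / (2 * (n : ℝ) + 1) ^ 4) := by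
      funext n; push_cast
      rw [one_div_mul_one_div]
      congr 1
      ring
    have e2 : (1:ℝ) / 96 = 1 / π ^ 4 * (π ^ 4 / 96) := by
      field_simp
    rw [e1, e2]; exact h
  have hneg : HasSum (fun n : ℕ => (1:ℝ) / (π ^ 2 * (2 * ((-(n+1) : ℤ) : ℝ) + 1) ^ 2) ^ 2) (1 / 96) := by
    have e : (fun n : ℕ => (1:ℝ) / (π ^ 2 * (2 * ((-(n+1) : ℤ) : ℝ) + 1) ^ 2) ^ 2)
        = fun n : ℕ => (1:ℝ) / (π ^ 2 * (2 * ((n : ℤ) : ℝ) + 1) ^ 2) ^ 2 := by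
      funext n; push_cast; ring_nf
    rw [e]; exact hnat
  have h := HasSum.of_nat_of_neg_add_one
    (f := fun k : ℤ => (1:ℝ) / (π ^ 2 * (2 * (k : ℝ) + 1) ^ 2) ^ 2) hnat hneg
  convert h using 1
  norm_num

theorem intS3 : HasSum (fun k : ℤ => (1:ℝ) / (π ^ 2 * (2 * (k : ℝ) + 1) ^ 2) ^ 3) (1 / 480) := by
  have hnat : HasSum (fun n : ℕ => (1:ℝ) / (π ^ 2 * (2 * ((n : ℤ) : ℝ) + 1) ^ 2) ^ 3) (1 / 960) := by
    have h := odd6'.mul_left ((1:ℝ) / π ^ 6)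
    have e1 : (fun n : ℕ => (1:ℝ) / (π ^ 2 * (2 * ((n : ℤ) : ℝ) + 1) ^ 2) ^ 3)
        = fun n : ℕ => (1:ℝ) / π ^ 6 * (1 / (2 * (n : ℝ) + 1) ^ 6) := by
      funext n; push_cast
      rw [one_div_mul_one_div]
      congr 1
      ring
    have e2 : (1:ℝ) / 960 = 1 / π ^ 6 * (π ^ 6 / 960) := by
      field_simp
    rw [e1, e2]; exact h
  have hneg : HasSum (fun n : ℕ => (1:ℝ) / (π ^ 2 * (2 * ((-(n+1) : ℤ) : ℝ) + 1) ^ 2) ^ 3) (1 / 960) := by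
    have e : (fun n : ℕ => (1:ℝ) / (π ^ 2 * (2 * ((-(n+1) : ℤ) : ℝ) + 1) ^ 2) ^ 3)
        = fun n : ℕ => (1:ℝ) / (π ^ 2 * (2 * ((n : ℤ) : ℝ) + 1) ^ 2) ^ 3 := by
      funext n; push_cast; ring_nf
    rw [e]; exact hnat
  have h := HasSum.of_nat_of_neg_add_one
    (f := fun k : ℤ => (1:ℝ) / (π ^ 2 * (2 * (k : ℝ) + 1) ^ 2) ^ 3) hnat hneg
  convert h using 1
  norm_num

theorem core (t : ℝ) (ht : 0 < t) (ht1 : t < 1) :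
    |(∑' k : ℤ, t ^ 4 / (t ^ 2 + π ^ 2 * (2 * (k : ℝ) + 1) ^ 2) ^ 2)
      - t ^ 4 / 48 + t ^ 6 / 240| ≤ t ^ 8 := by
  have hπ : 0 < π := pi_pos
  have ht2 : t ^ 2 ≤ 1 := by nlinarith
  have hk1 : ∀ k : ℤ, (1:ℝ) ≤ (2 * (k : ℝ) + 1) ^ 2 := by
    intro k
    have h0 : (1:ℤ) ≤ (2 * k + 1) ^ 2 := by
      have hne : 2 * k + 1 ≠ 0 := by omega
      have habs := Int.one_le_abs hne
      nlinarith [sq_abs (2 * k + 1)]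
    have : ((1:ℤ):ℝ) ≤ (((2 * k + 1) ^ 2 : ℤ) : ℝ) := by exact_mod_cast h0
    push_cast at this
    nlinarith [this]
  have ha1 : ∀ k : ℤ, (1:ℝ) ≤ π ^ 2 * (2 * (k : ℝ) + 1) ^ 2 := by
    intro k
    have h1 : (1:ℝ) ≤ π ^ 2 := by nlinarith [pi_gt_three]
    nlinarith [hk1 k]
  have hapos : ∀ k : ℤ, (0:ℝ) < π ^ 2 * (2 * (k : ℝ) + 1) ^ 2 :=
    fun k => lt_of_lt_of_le one_pos (ha1 k)
  set h : ℤ → ℝ := fun k =>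
    t ^ 8 * (3 * (π ^ 2 * (2 * (k : ℝ) + 1) ^ 2) + 2 * t ^ 2)
      / ((π ^ 2 * (2 * (k : ℝ) + 1) ^ 2) ^ 3 * (t ^ 2 + π ^ 2 * (2 * (k : ℝ) + 1) ^ 2) ^ 2)
    with hh
  have hdecomp : ∀ k : ℤ,
      t ^ 4 * (1 / (π ^ 2 * (2 * (k : ℝ) + 1) ^ 2) ^ 2)
        - 2 * t ^ 6 * (1 / (π ^ 2 * (2 * (k : ℝ) + 1) ^ 2) ^ 3) + h k
      = t ^ 4 / (t ^ 2 + π ^ 2 * (2 * (k : ℝ) + 1) ^ 2) ^ 2 := by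
    intro k
    have hA := hapos k
    have hTA : 0 < t ^ 2 + π ^ 2 * (2 * (k : ℝ) + 1) ^ 2 := by positivity
    have hk0 : (2 * (k : ℝ) + 1) ≠ 0 := fun h0 => by
      have := hk1 k; rw [h0] at this; norm_num at this
    simp only [hh]
    field_simp
    ring
  have hnn : ∀ k : ℤ, 0 ≤ h k := by
    intro k
    have hA := hapos k
    have hTA : 0 < t ^ 2 + π ^ 2 * (2 * (k : ℝ) + 1) ^ 2 := by positivity
    exact div_nonneg (by positivity) (by positivity)
  have hub : ∀ k : ℤ, h k ≤ 5 * t ^ 8 * (1 / (π ^ 2 * (2 * (k : ℝ) + 1) ^ 2) ^ 2) := by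
    intro k
    set A := π ^ 2 * (2 * (k : ℝ) + 1) ^ 2 with hA'
    have hA1 : (1:ℝ) ≤ A := ha1 k
    have hA : 0 < A := hapos k
    have hTA : 0 < t ^ 2 + A := by positivity
    have step1 : h k ≤ t ^ 8 * (5 * A) / (A ^ 3 * A ^ 2) := by
      simp only [hh]
      gcongr
      · nlinarith
      · nlinarith [sq_nonneg t]
    have e : t ^ 8 * (5 * A) / (A ^ 3 * A ^ 2) = 5 * t ^ 8 / A ^ 4 := by
      field_simp
    have e2 : 5 * t ^ 8 * (1 / A ^ 2) = 5 * t ^ 8 / A ^ 2 := by ring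
    have step2 : 5 * t ^ 8 / A ^ 4 ≤ 5 * t ^ 8 / A ^ 2 := by
      exact div_le_div_of_nonneg_left (by positivity) (by positivity)
        (pow_le_pow_right₀ hA1 (by norm_num))
    rw [e2]
    calc h k ≤ t ^ 8 * (5 * A) / (A ^ 3 * A ^ 2) := step1
      _ = 5 * t ^ 8 / A ^ 4 := e
      _ ≤ 5 * t ^ 8 / A ^ 2 := step2
  have hsummable_h : Summable h :=
    Summable.of_nonneg_of_le hnn hub (intS2.summable.mul_left (5 * t ^ 8))
  have hmain : HasSum (fun k : ℤ => t ^ 4 / (t ^ 2 + π ^ 2 * (2 * (k : ℝ) + 1) ^ 2) ^ 2)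
      (t ^ 4 * (1 / 48) - 2 * t ^ 6 * (1 / 480) + ∑' k, h k) := by
    have H := ((intS2.mul_left (t ^ 4)).sub (intS3.mul_left (2 * t ^ 6))).add hsummable_h.hasSum
    have efun : (fun k : ℤ => t ^ 4 * (1 / (π ^ 2 * (2 * (k : ℝ) + 1) ^ 2) ^ 2)
          - 2 * t ^ 6 * (1 / (π ^ 2 * (2 * (k : ℝ) + 1) ^ 2) ^ 3) + h k)
        = fun k : ℤ => t ^ 4 / (t ^ 2 + π ^ 2 * (2 * (k : ℝ) + 1) ^ 2) ^ 2 := funext hdecomp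
    rwa [efun] at H
  rw [hmain.tsum_eq]
  have hH0 : 0 ≤ ∑' k, h k := tsum_nonneg hnn
  have hHub : (∑' k, h k) ≤ 5 * t ^ 8 * (1 / 48) := by
    have h2 := Summable.tsum_le_tsum hub hsummable_h (intS2.summable.mul_left (5 * t ^ 8))
    rwa [(intS2.mul_left (5 * t ^ 8)).tsum_eq] at h2
  have e3 : t ^ 4 * (1 / 48) - 2 * t ^ 6 * (1 / 480) + (∑' k, h k) - t ^ 4 / 48 + t ^ 6 / 240
      = ∑' k, h k := by ring
  rw [e3, abs_of_nonneg hH0]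
  nlinarith [pow_nonneg ht.le 8]

/-- Expansion of the aliased Matérn (ν = 3/2, d = 1) spectral density at
the highest frequency `1/(2Δ)`:
`M_Δ(1/(2Δ); 3/2, 1)/(4/α) = α⁴Δ⁴/48 - α⁶Δ⁶/240 + O(α⁸Δ⁸)`. -/
theorem matern_threehalves_d1_nyquist_expansion :
    ∃ C > (0 : ℝ), ∃ δ > (0 : ℝ), ∀ α Δ : ℝ, 0 < α → 0 < Δ → α * Δ < δ →
      |(∑' k : ℤ,
            4 * α ^ 3 / (α ^ 2 + 4 * π ^ 2 * (1 / (2 * Δ) + (k : ℝ) / Δ) ^ 2) ^ 2) / (4 / α)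
          - α ^ 4 * Δ ^ 4 / 48 + α ^ 6 * Δ ^ 6 / 240|
        ≤ C * α ^ 8 * Δ ^ 8 := by
  refine ⟨1, one_pos, 1, one_pos, ?_⟩
  intro α Δ hα hΔ hδ
  have hπ : 0 < π := pi_pos
  have ht : 0 < α * Δ := mul_pos hα hΔ
  have hrw : (∑' k : ℤ,
        4 * α ^ 3 / (α ^ 2 + 4 * π ^ 2 * (1 / (2 * Δ) + (k : ℝ) / Δ) ^ 2) ^ 2) / (4 / α)
      = ∑' k : ℤ, (α * Δ) ^ 4 / ((α * Δ) ^ 2 + π ^ 2 * (2 * (k : ℝ) + 1) ^ 2) ^ 2 := by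
    rw [← tsum_div_const]
    refine tsum_congr fun k => ?_
    have hD1 : 0 < α ^ 2 + 4 * π ^ 2 * (1 / (2 * Δ) + (k : ℝ) / Δ) ^ 2 :=
      add_pos_of_pos_of_nonneg (pow_pos hα 2) (by positivity)
    have hD2 : 0 < (α * Δ) ^ 2 + π ^ 2 * (2 * (k : ℝ) + 1) ^ 2 :=
      add_pos_of_pos_of_nonneg (pow_pos ht 2) (by positivity)
    rw [div_div_eq_mul_div, div_eq_div_iff (by positivity) (by positivity)]
    have e1 : 1 / (2 * Δ) + (k : ℝ) / Δ = (2 * (k : ℝ) + 1) / (2 * Δ) := by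
      field_simp; ring
    rw [e1]
    field_simp
    ring
  rw [hrw]
  have hcore := core (α * Δ) ht hδ
  have e4 : α ^ 4 * Δ ^ 4 / 48 = (α * Δ) ^ 4 / 48 := by ring
  have e6 : α ^ 6 * Δ ^ 6 / 240 = (α * Δ) ^ 6 / 240 := by ring
  have e8 : (α * Δ) ^ 8 = 1 * α ^ 8 * Δ ^ 8 := by ring
  rw [e4, e6, ← e8]
  exact hcore
end

section
/- Let S₁ = Σ_{k∈ℤ²} [(2k₁ + 1)² + (2k₂)²]^{−2}. There exist constants C > 0 and δ > 0 such that for all α > 0 and Δ > 0 with αΔ < δ, the aliased two-dimensional Matérn spectral density with ν = 1 at frequency (1/(2Δ), 0) satisfies | M_Δ((1/(2Δ), 0); 1, 2)/(4π/α²) − (S₁/π⁴) α⁴Δ⁴ | ≤ C α⁶Δ⁶. (Numerically π⁴/S₁ ≈ 43.1003.) -/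
open Real

/-- `S₁ = Σ_{k∈ℤ²} [(2k₁ + 1)² + (2k₂)²]^{-2}`. -/
noncomputable def S1 : ℝ :=
  ∑' k : ℤ × ℤ, 1 / ((2 * (k.1 : ℝ) + 1) ^ 2 + (2 * (k.2 : ℝ)) ^ 2) ^ 2

noncomputable def Amat (k : ℤ × ℤ) : ℝ :=
  (2 * (k.1 : ℝ) + 1) ^ 2 + (2 * (k.2 : ℝ)) ^ 2

lemma Amat_one_le (k : ℤ × ℤ) : 1 ≤ Amat k := by
  have h : (2 * k.1 + 1 : ℤ) ≠ 0 := by omega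
  have h1 : (1 : ℤ) ≤ |2 * k.1 + 1| := Int.one_le_abs h
  have h1' : (1 : ℝ) ≤ |2 * (k.1 : ℝ) + 1| := by exact_mod_cast h1
  unfold Amat
  nlinarith [sq_nonneg (2 * (k.2 : ℝ)), sq_abs (2 * (k.1 : ℝ) + 1)]

lemma Amat_pos (k : ℤ × ℤ) : 0 < Amat k := lt_of_lt_of_le one_pos (Amat_one_le k)

lemma Amat_lower (k : ℤ × ℤ) : 1 + (k.1 : ℝ) ^ 2 + (k.2 : ℝ) ^ 2 ≤ 2 * Amat k := by
  have h : (0 : ℤ) ≤ (7 * k.1 + 1) * (k.1 + 1) := by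
    rcases le_or_gt 0 k.1 with h | h
    · positivity
    · have h1 : k.1 + 1 ≤ 0 := by omega
      have h2 : 7 * k.1 + 1 ≤ 0 := by omega
      nlinarith
  have h' : (0 : ℝ) ≤ (7 * (k.1 : ℝ) + 1) * ((k.1 : ℝ) + 1) := by exact_mod_cast h
  unfold Amat
  nlinarith [sq_nonneg (k.2 : ℝ)]

lemma summable_nat_aux : Summable (fun n : ℕ => 1 / (1 + (n : ℝ) ^ 2)) := by
  have h : Summable (fun n : ℕ => 2 / ((n : ℝ) + 1) ^ 2) := by
    have := (summable_nat_add_iff (f := fun n : ℕ => 1 / (n : ℝ) ^ 2) 1).mpr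
      (summable_one_div_nat_pow.mpr one_lt_two)
    exact (this.mul_left 2).congr (by intro n; push_cast; ring)
  refine h.of_nonneg_of_le (fun n => by positivity) (fun n => ?_)
  rw [div_le_div_iff₀ (by positivity) (by positivity)]
  have hn : (0:ℝ) ≤ (n:ℝ) := n.cast_nonneg
  nlinarith [sq_nonneg ((n:ℝ) - 1)]

lemma summable_int_aux : Summable (fun n : ℤ => 1 / (1 + (n : ℝ) ^ 2)) := by
  apply Summable.of_nat_of_neg
  · exact summable_nat_aux.congr (by intro n; push_cast; ring)
  · exact summable_nat_aux.congr (by intro n; push_cast; ring)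

set_option maxHeartbeats 1000000 in
lemma summable_invA2 : Summable (fun k : ℤ × ℤ => 1 / (Amat k) ^ 2) := by
  have hprod : Summable (fun k : ℤ × ℤ =>
      (2 * (1 / (1 + (k.1 : ℝ) ^ 2))) * (2 * (1 / (1 + (k.2 : ℝ) ^ 2)))) :=
    Summable.mul_of_nonneg (summable_int_aux.mul_left 2) (summable_int_aux.mul_left 2)
      (fun n => by positivity) (fun n => by positivity)
  refine hprod.of_nonneg_of_le (fun k => by positivity) (fun k => ?_)
  set x := (k.1 : ℝ)
  set y := (k.2 : ℝ)
  set a := Amat k with ha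
  have h1 : 1 + x ^ 2 + y ^ 2 ≤ 2 * a := Amat_lower k
  have h2 : (0:ℝ) < a := Amat_pos k
  have e : (2 * (1 / (1 + x ^ 2))) * (2 * (1 / (1 + y ^ 2)))
      = 4 / ((1 + x ^ 2) * (1 + y ^ 2)) := by
    field_simp
    norm_num
  rw [e, div_le_div_iff₀ (by positivity) (by positivity)]
  have hsq : (1 + x ^ 2) * (1 + y ^ 2) ≤ (1 + x ^ 2 + y ^ 2) ^ 2 := by
    nlinarith [sq_nonneg x, sq_nonneg y, sq_nonneg (x*y)]
  have hsq2 : (1 + x ^ 2 + y ^ 2) ^ 2 ≤ (2 * a) ^ 2 := by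
    have h0 : (0:ℝ) ≤ 1 + x ^ 2 + y ^ 2 := by positivity
    nlinarith
  nlinarith

lemma key_bound {t a : ℝ} (ht : 0 < t) (ht1 : t ≤ 1) (ha : 1 ≤ a) :
    |1 / (t ^ 2 + π ^ 2 * a) ^ 2 - 1 / (π ^ 2 * a) ^ 2|
      ≤ (1 + 2 * π ^ 2) / π ^ 8 * t ^ 2 * (1 / a ^ 2) := by
  have ha0 : (0:ℝ) < a := lt_of_lt_of_le one_pos ha
  have hπ : (0:ℝ) < π := pi_pos
  have hpa : (0:ℝ) < π ^ 2 * a := by positivity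
  have hta : (0:ℝ) < t ^ 2 + π ^ 2 * a := by positivity
  have hmono : 1 / (t ^ 2 + π ^ 2 * a) ^ 2 ≤ 1 / (π ^ 2 * a) ^ 2 := by
    gcongr
    nlinarith
  rw [abs_of_nonpos (by linarith), neg_sub]
  have e : 1 / (π ^ 2 * a) ^ 2 - 1 / (t ^ 2 + π ^ 2 * a) ^ 2
      = (t ^ 2 * (t ^ 2 + 2 * π ^ 2 * a)) / ((π ^ 2 * a) ^ 2 * (t ^ 2 + π ^ 2 * a) ^ 2) := by
    field_simp
    ring
  rw [e]
  have ht2 : t ^ 2 ≤ a := by nlinarith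
  calc (t ^ 2 * (t ^ 2 + 2 * π ^ 2 * a)) / ((π ^ 2 * a) ^ 2 * (t ^ 2 + π ^ 2 * a) ^ 2)
      ≤ (t ^ 2 * ((1 + 2 * π ^ 2) * a)) / (π ^ 8 * a ^ 4) := by
        apply div_le_div₀ (by positivity) ?_ (by positivity) ?_
        · nlinarith
        · have h1 : (π ^ 2 * a) ^ 2 ≤ (t ^ 2 + π ^ 2 * a) ^ 2 := by nlinarith [sq_nonneg t]
          calc π ^ 8 * a ^ 4 = (π ^ 2 * a) ^ 2 * (π ^ 2 * a) ^ 2 := by ring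
            _ ≤ (π ^ 2 * a) ^ 2 * (t ^ 2 + π ^ 2 * a) ^ 2 :=
                mul_le_mul_of_nonneg_left h1 (by positivity)
    _ = (1 + 2 * π ^ 2) / π ^ 8 * t ^ 2 * (1 / a ^ 3) := by
        field_simp
    _ ≤ (1 + 2 * π ^ 2) / π ^ 8 * t ^ 2 * (1 / a ^ 2) := by
        have h3 : (1:ℝ) / a ^ 3 ≤ 1 / a ^ 2 := by
          apply one_div_le_one_div_of_le (by positivity)
          nlinarith
        exact mul_le_mul_of_nonneg_left h3 (by positivity)

lemma S1_eq : S1 = ∑' k : ℤ × ℤ, 1 / (Amat k) ^ 2 := rfl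

lemma S1_pos : 0 < S1 := by
  rw [S1_eq]
  refine Summable.tsum_pos summable_invA2 (fun k => div_nonneg zero_le_one (by positivity)) (0, 0) ?_
  exact div_pos one_pos (pow_pos (Amat_pos (0, 0)) 2)

set_option maxHeartbeats 4000000 in
/-- Expansion of the aliased two-dimensional Matérn (ν = 1) spectral density at
frequency (1/(2Δ), 0): `M_Δ((1/(2Δ),0); 1, 2)/(4π/α²) = (S₁/π⁴) α⁴Δ⁴ + O(α⁶Δ⁶)`. -/
theorem matern_one_d2_nyquist_zero_expansion :
    ∃ C > (0 : ℝ), ∃ δ > (0 : ℝ), ∀ α Δ : ℝ, 0 < α → 0 < Δ → α * Δ < δ →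
      |(4 * π * α ^ 2 * ∑' k : ℤ × ℤ,
            1 / (α ^ 2 + 4 * π ^ 2 * (1 / (2 * Δ) + (k.1 : ℝ) / Δ) ^ 2
                + 4 * π ^ 2 * ((0 : ℝ) + (k.2 : ℝ) / Δ) ^ 2) ^ 2) / (4 * π / α ^ 2)
          - (S1 / π ^ 4) * α ^ 4 * Δ ^ 4|
        ≤ C * α ^ 6 * Δ ^ 6 := by
  have hπ : (0:ℝ) < π := pi_pos
  have hπ0 : π ≠ 0 := pi_ne_zero
  refine ⟨(1 + 2 * π ^ 2) / π ^ 8 * S1,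
    mul_pos (div_pos (by positivity) (by positivity)) S1_pos, 1, one_pos, ?_⟩
  intro α Δ hα hΔ htδ
  have hα0 : α ≠ 0 := hα.ne'
  have hΔ0 : Δ ≠ 0 := hΔ.ne'
  have ht : 0 < α * Δ := mul_pos hα hΔ
  set T : ℝ := ∑' k : ℤ × ℤ, 1 / ((α * Δ) ^ 2 + π ^ 2 * Amat k) ^ 2 with hT
  set S : ℝ := ∑' k : ℤ × ℤ, 1 / (π ^ 2 * Amat k) ^ 2 with hS
  have hterm : ∀ k : ℤ × ℤ,
      1 / (α ^ 2 + 4 * π ^ 2 * (1 / (2 * Δ) + (k.1 : ℝ) / Δ) ^ 2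
          + 4 * π ^ 2 * ((0 : ℝ) + (k.2 : ℝ) / Δ) ^ 2) ^ 2
        = Δ ^ 4 * (1 / ((α * Δ) ^ 2 + π ^ 2 * Amat k) ^ 2) := by
    intro k
    have hpos : (0:ℝ) < (α * Δ) ^ 2 + π ^ 2 * Amat k :=
      add_pos_of_nonneg_of_pos (sq_nonneg _) (mul_pos (pow_pos hπ 2) (Amat_pos k))
    have hX : α ^ 2 + 4 * π ^ 2 * (1 / (2 * Δ) + (k.1 : ℝ) / Δ) ^ 2
        + 4 * π ^ 2 * ((0 : ℝ) + (k.2 : ℝ) / Δ) ^ 2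
        = ((α * Δ) ^ 2 + π ^ 2 * Amat k) / Δ ^ 2 := by
      unfold Amat
      field_simp
      ring
    rw [hX, div_pow, one_div_div]
    ring
  have hmain : (4 * π * α ^ 2 * ∑' k : ℤ × ℤ,
        1 / (α ^ 2 + 4 * π ^ 2 * (1 / (2 * Δ) + (k.1 : ℝ) / Δ) ^ 2
            + 4 * π ^ 2 * ((0 : ℝ) + (k.2 : ℝ) / Δ) ^ 2) ^ 2) / (4 * π / α ^ 2)
      = α ^ 4 * Δ ^ 4 * T := by
    rw [tsum_congr hterm, tsum_mul_left, hT]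
    field_simp
  have hg_sum : Summable (fun k : ℤ × ℤ => 1 / (π ^ 2 * Amat k) ^ 2) :=
    (summable_invA2.mul_left (1 / π ^ 4)).congr (fun k => by field_simp)
  have hh_sum : Summable (fun k : ℤ × ℤ => 1 / ((α * Δ) ^ 2 + π ^ 2 * Amat k) ^ 2) := by
    refine hg_sum.of_nonneg_of_le (fun k => by positivity) (fun k => ?_)
    have hA := Amat_pos k
    have h1 : (π ^ 2 * Amat k) ^ 2 ≤ ((α * Δ) ^ 2 + π ^ 2 * Amat k) ^ 2 := by
      nlinarith [sq_nonneg ((α * Δ) ^ 2),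
        mul_nonneg (sq_nonneg (α * Δ)) (mul_pos (pow_pos hπ 2) hA).le]
    exact one_div_le_one_div_of_le (pow_pos (mul_pos (pow_pos hπ 2) hA) 2) h1
  have hSdiv : S1 / π ^ 4 = S := by
    rw [S1_eq, ← tsum_div_const, hS]
    exact tsum_congr (fun k => by field_simp)
  have hb_sum : Summable (fun k : ℤ × ℤ =>
      ((1 + 2 * π ^ 2) / π ^ 8 * (α * Δ) ^ 2) * (1 / (Amat k) ^ 2)) :=
    summable_invA2.mul_left _
  have hbound : ∀ k : ℤ × ℤ,
      |1 / ((α * Δ) ^ 2 + π ^ 2 * Amat k) ^ 2 - 1 / (π ^ 2 * Amat k) ^ 2|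
        ≤ ((1 + 2 * π ^ 2) / π ^ 8 * (α * Δ) ^ 2) * (1 / (Amat k) ^ 2) := by
    intro k
    have := key_bound (t := α * Δ) (a := Amat k) ht htδ.le (Amat_one_le k)
    calc _ ≤ (1 + 2 * π ^ 2) / π ^ 8 * (α * Δ) ^ 2 * (1 / (Amat k) ^ 2) := this
      _ = _ := by ring
  have hTS : |T - S| ≤ (1 + 2 * π ^ 2) / π ^ 8 * (α * Δ) ^ 2 * S1 := by
    rw [hT, hS, ← Summable.tsum_sub hh_sum hg_sum]
    have habs : Summable (fun k : ℤ × ℤ =>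
        |1 / ((α * Δ) ^ 2 + π ^ 2 * Amat k) ^ 2 - 1 / (π ^ 2 * Amat k) ^ 2|) :=
      (hh_sum.sub hg_sum).abs
    calc |∑' k : ℤ × ℤ, (1 / ((α * Δ) ^ 2 + π ^ 2 * Amat k) ^ 2 - 1 / (π ^ 2 * Amat k) ^ 2)|
        ≤ ∑' k : ℤ × ℤ, |1 / ((α * Δ) ^ 2 + π ^ 2 * Amat k) ^ 2 - 1 / (π ^ 2 * Amat k) ^ 2| := by
          have hnorm := norm_tsum_le_tsum_norm
            (f := fun k : ℤ × ℤ => 1 / ((α * Δ) ^ 2 + π ^ 2 * Amat k) ^ 2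
              - 1 / (π ^ 2 * Amat k) ^ 2) (by simpa [Real.norm_eq_abs] using habs)
          simpa [Real.norm_eq_abs] using hnorm
      _ ≤ ∑' k : ℤ × ℤ, ((1 + 2 * π ^ 2) / π ^ 8 * (α * Δ) ^ 2) * (1 / (Amat k) ^ 2) :=
          Summable.tsum_le_tsum hbound habs hb_sum
      _ = (1 + 2 * π ^ 2) / π ^ 8 * (α * Δ) ^ 2 * S1 := by rw [tsum_mul_left, S1_eq]
  rw [hmain]
  have e2 : α ^ 4 * Δ ^ 4 * T - S1 / π ^ 4 * α ^ 4 * Δ ^ 4 = α ^ 4 * Δ ^ 4 * (T - S1 / π ^ 4) := by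
    ring
  rw [e2, abs_mul, abs_of_nonneg (by positivity : (0:ℝ) ≤ α ^ 4 * Δ ^ 4), hSdiv]
  calc α ^ 4 * Δ ^ 4 * |T - S|
      ≤ α ^ 4 * Δ ^ 4 * ((1 + 2 * π ^ 2) / π ^ 8 * (α * Δ) ^ 2 * S1) :=
        mul_le_mul_of_nonneg_left hTS (by positivity)
    _ = (1 + 2 * π ^ 2) / π ^ 8 * S1 * α ^ 6 * Δ ^ 6 := by ring
end
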